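/- The functions A and B are bounded on ℝ², B is continuous on ℝ², and both A and B are integrable and square-integrable on ℝ², i.e. A, B ∈ L¹(ℝ²) ∩ L²(ℝ²). -/

import Mathlib

open MeasureTheory

/-- The upper incomplete gamma function `Γ(1/2, a) = ∫_a^∞ e^{-u} u^{-1/2} du`. -/
noncomputable def Ginc (a : ℝ) : ℝ := ∫ u in Set.Ioi a, Real.exp (-u) * u ^ (-(1:ℝ)/2)

/-- The `e₂`-component `A` of the singular Schwartz function `ψ̃₀,₁`. -/
noncomputable def A (x : ℝ × ℝ) : ℝ :=
  (1 / (2 * Real.sqrt Real.pi)) * x.1 * Real.sign x.2 * Ginc (2 * Real.pi * x.2 ^ 2) *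
    Real.exp (-(Real.pi * (x.1 ^ 2 - x.2 ^ 2)))

/-- The `e₃`-component `B` of the singular Schwartz function `ψ̃₀,₁`. -/
noncomputable def B (x : ℝ × ℝ) : ℝ :=
  -(1 / (2 * Real.sqrt 2 * Real.pi)) * Real.exp (-(Real.pi * (x.1 ^ 2 + x.2 ^ 2)))
  + (1 / (2 * Real.sqrt Real.pi)) * |x.2| * Ginc (2 * Real.pi * x.2 ^ 2) *
      Real.exp (-(Real.pi * (x.1 ^ 2 - x.2 ^ 2)))

open Real Set Filter

noncomputable def ff (u : ℝ) : ℝ := Real.exp (-u) * u ^ (-(1:ℝ)/2)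

lemma ff_zero {u : ℝ} (hu : u ≤ 0) : ff u = 0 := by
  rcases lt_or_eq_of_le hu with h | h
  · have : u ^ (-(1:ℝ)/2) = 0 := by
      rw [Real.rpow_def_of_neg h]
      have : Real.cos (-(1:ℝ)/2 * π) = 0 := by
        rw [show (-(1:ℝ)/2 * π) = -(π/2) by ring, Real.cos_neg, Real.cos_pi_div_two]
      rw [this, mul_zero]
    simp [ff, this]
  · subst h
    simp [ff, Real.zero_rpow (by norm_num : (-(1:ℝ)/2) ≠ 0)]

lemma ff_nonneg (u : ℝ) : 0 ≤ ff u := by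
  rcases le_or_gt u 0 with h | h
  · rw [ff_zero h]
  · exact mul_nonneg (Real.exp_nonneg _) (Real.rpow_nonneg h.le _)

lemma ff_integrableOn_Ioi : IntegrableOn ff (Ioi 0) := by
  have h : (-(1:ℝ)/2) = (1/2 : ℝ) - 1 := by norm_num
  unfold ff
  rw [h]
  exact Real.GammaIntegral_convergent (by norm_num)

lemma ff_integrable : Integrable ff := by
  have h := (integrable_indicator_iff measurableSet_Ioi).mpr ff_integrableOn_Ioi
  refine h.congr (Filter.Eventually.of_forall fun u => ?_)
  rcases le_or_gt u 0 with hu | hu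
  · rw [Set.indicator_of_notMem (by simpa using hu), ff_zero hu]
  · rw [Set.indicator_of_mem (by simpa using hu)]

lemma Ginc_eq (a : ℝ) : Ginc a = ∫ u in Ioi a, ff u := rfl

lemma Ginc_nonneg (a : ℝ) : 0 ≤ Ginc a :=
  setIntegral_nonneg measurableSet_Ioi fun u _ => ff_nonneg u

lemma Ginc_le_sqrt_pi (a : ℝ) : Ginc a ≤ Real.sqrt π := by
  have h1 : Ginc a ≤ ∫ u, ff u :=
    setIntegral_le_integral ff_integrable (Filter.Eventually.of_forall ff_nonneg)
  have h2 : (∫ u, ff u) = ∫ u in Ioi 0, ff u :=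
    (setIntegral_eq_integral_of_forall_compl_eq_zero fun u hu =>
      ff_zero (by simpa using hu)).symm
  have h3 : (∫ u in Ioi 0, ff u) = Real.sqrt π := by
    rw [← Real.Gamma_one_half_eq, Real.Gamma_eq_integral (by norm_num : (0:ℝ) < 1/2)]
    unfold ff
    norm_num
  linarith

lemma Ginc_le_exp {a : ℝ} (ha : 1 ≤ a) : Ginc a ≤ Real.exp (-a) := by
  have hexp : IntegrableOn (fun u : ℝ => Real.exp (-u)) (Ioi a) := by
    simpa using exp_neg_integrableOn_Ioi a one_pos
  have h1 : Ginc a ≤ ∫ u in Ioi a, Real.exp (-u) := by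
    rw [Ginc_eq]
    refine setIntegral_mono_on ff_integrable.integrableOn hexp measurableSet_Ioi ?_
    intro u hu
    have hu1 : (1:ℝ) ≤ u := le_trans ha (le_of_lt hu)
    have := Real.rpow_le_one_of_one_le_of_nonpos hu1 (by norm_num : (-(1:ℝ)/2) ≤ 0)
    calc ff u = Real.exp (-u) * u ^ (-(1:ℝ)/2) := rfl
    _ ≤ Real.exp (-u) * 1 := by
        exact mul_le_mul_of_nonneg_left this (Real.exp_nonneg _)
    _ = Real.exp (-u) := mul_one _
  rw [integral_exp_neg_Ioi] at h1
  exact h1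

lemma Ginc_continuous : Continuous Ginc := by
  have key : Ginc = fun a =>
      ((∫ u, ff u) - ∫ u in Iic (0:ℝ), ff u) - ∫ u in (0:ℝ)..a, ff u := by
    funext a
    rw [← intervalIntegral.integral_Iic_sub_Iic ff_integrable.integrableOn
      ff_integrable.integrableOn, Ginc_eq,
      ← intervalIntegral.integral_Iic_add_Ioi ff_integrable.integrableOn
      ff_integrable.integrableOn (b := a)]
    ring
  rw [key]
  exact continuous_const.sub (ff_integrable.continuous_primitive 0)

noncomputable def KK : ℝ := Real.sqrt π * Real.exp (3*π/2)

lemma one_le_KK : 1 ≤ KK := by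
  have h1 : (1:ℝ) ≤ Real.sqrt π := by
    rw [show (1:ℝ) = Real.sqrt 1 by simp]
    exact Real.sqrt_le_sqrt (by linarith [Real.pi_gt_three])
  have h2 : (1:ℝ) ≤ Real.exp (3*π/2) :=
    Real.one_le_exp (by positivity)
  calc (1:ℝ) = 1 * 1 := by ring
  _ ≤ Real.sqrt π * Real.exp (3*π/2) := by
      exact mul_le_mul h1 h2 zero_le_one (by positivity)

lemma KK_nonneg : 0 ≤ KK := le_trans zero_le_one one_le_KK

lemma Ginc_key (t : ℝ) : Ginc (2*π*t^2) ≤ KK * Real.exp (-(3*π/2) * t^2) := by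
  rcases le_or_gt (t^2) 1 with h | h
  · have h1 : (1:ℝ) ≤ Real.exp (3*π/2) * Real.exp (-(3*π/2) * t^2) := by
      rw [← Real.exp_add]
      apply Real.one_le_exp
      nlinarith [Real.pi_gt_three]
    calc Ginc (2*π*t^2) ≤ Real.sqrt π := Ginc_le_sqrt_pi _
    _ = Real.sqrt π * 1 := (mul_one _).symm
    _ ≤ Real.sqrt π * (Real.exp (3*π/2) * Real.exp (-(3*π/2) * t^2)) :=
        mul_le_mul_of_nonneg_left h1 (Real.sqrt_nonneg _)
    _ = KK * Real.exp (-(3*π/2) * t^2) := by rw [KK]; ring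
  · have h1 : (1:ℝ) ≤ t^2 := h.le
    have ha : (1:ℝ) ≤ 2*π*t^2 := by nlinarith [Real.pi_gt_three]
    calc Ginc (2*π*t^2) ≤ Real.exp (-(2*π*t^2)) := Ginc_le_exp ha
    _ ≤ Real.exp (-(3*π/2) * t^2) := by
        apply Real.exp_le_exp.mpr
        nlinarith [Real.pi_gt_three]
    _ ≤ KK * Real.exp (-(3*π/2) * t^2) :=
        le_mul_of_one_le_left (Real.exp_nonneg _) one_le_KK

lemma abs_le_exp_quarter (t : ℝ) : |t| ≤ Real.exp (π/4 * t^2) := by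
  have h : t^2 ≤ Real.exp (π/2 * t^2) := by
    have := Real.add_one_le_exp (π/2 * t^2)
    nlinarith [Real.pi_gt_three, sq_nonneg t]
  have h2 : Real.exp (π/2 * t^2) = Real.exp (π/4 * t^2) ^ 2 := by
    have e := Real.exp_add (π/4 * t^2) (π/4 * t^2)
    rw [show π/4 * t^2 + π/4 * t^2 = π/2 * t^2 by ring] at e
    rw [e]; ring
  calc |t| = Real.sqrt (t^2) := (Real.sqrt_sq_eq_abs t).symm
  _ ≤ Real.sqrt (Real.exp (π/4 * t^2) ^ 2) := Real.sqrt_le_sqrt (by rw [← h2]; exact h)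
  _ = Real.exp (π/4 * t^2) := Real.sqrt_sq (Real.exp_nonneg _)

lemma lemA1 (t : ℝ) : |t| * Real.exp (-(π * t^2)) ≤ Real.exp (-(π/4) * t^2) := by
  calc |t| * Real.exp (-(π * t^2))
      ≤ Real.exp (π/4 * t^2) * Real.exp (-(π * t^2)) :=
        mul_le_mul_of_nonneg_right (abs_le_exp_quarter t) (Real.exp_nonneg _)
  _ = Real.exp (π/4 * t^2 + -(π * t^2)) := (Real.exp_add _ _).symm
  _ ≤ Real.exp (-(π/4) * t^2) := by
      apply Real.exp_le_exp.mpr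
      nlinarith [Real.pi_pos, sq_nonneg t]

lemma lemA2 (t : ℝ) : Ginc (2*π*t^2) * Real.exp (π * t^2) ≤ KK * Real.exp (-(π/4) * t^2) := by
  calc Ginc (2*π*t^2) * Real.exp (π * t^2)
      ≤ KK * Real.exp (-(3*π/2) * t^2) * Real.exp (π * t^2) :=
        mul_le_mul_of_nonneg_right (Ginc_key t) (Real.exp_nonneg _)
  _ = KK * Real.exp (-(3*π/2) * t^2 + π * t^2) := by rw [mul_assoc, ← Real.exp_add]
  _ ≤ KK * Real.exp (-(π/4) * t^2) := by
      apply mul_le_mul_of_nonneg_left _ KK_nonneg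
      apply Real.exp_le_exp.mpr
      nlinarith [Real.pi_pos, sq_nonneg t]

lemma lemB2 (t : ℝ) : |t| * Ginc (2*π*t^2) * Real.exp (π * t^2) ≤ KK * Real.exp (-(π/4) * t^2) := by
  calc |t| * Ginc (2*π*t^2) * Real.exp (π * t^2)
      ≤ Real.exp (π/4 * t^2) * (KK * Real.exp (-(3*π/2) * t^2)) * Real.exp (π * t^2) := by
        apply mul_le_mul_of_nonneg_right _ (Real.exp_nonneg _)
        exact mul_le_mul (abs_le_exp_quarter t) (Ginc_key t) (Ginc_nonneg _) (Real.exp_nonneg _)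
  _ = KK * Real.exp (π/4 * t^2 + -(3*π/2) * t^2 + π * t^2) := by
      rw [Real.exp_add, Real.exp_add]; ring
  _ ≤ KK * Real.exp (-(π/4) * t^2) := by
      apply mul_le_mul_of_nonneg_left _ KK_nonneg
      apply Real.exp_le_exp.mpr
      nlinarith [Real.pi_pos, sq_nonneg t]

noncomputable def gg (x : ℝ × ℝ) : ℝ :=
  Real.exp (-(π/4) * x.1^2) * Real.exp (-(π/4) * x.2^2)

lemma gg_nonneg (x : ℝ × ℝ) : 0 ≤ gg x := by unfold gg; positivity

lemma gg_le_one (x : ℝ × ℝ) : gg x ≤ 1 := by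
  unfold gg
  have h1 : Real.exp (-(π/4) * x.1^2) ≤ 1 := by
    rw [show (1:ℝ) = Real.exp 0 by simp]
    exact Real.exp_le_exp.mpr (by nlinarith [Real.pi_pos, sq_nonneg x.1])
  have h2 : Real.exp (-(π/4) * x.2^2) ≤ 1 := by
    rw [show (1:ℝ) = Real.exp 0 by simp]
    exact Real.exp_le_exp.mpr (by nlinarith [Real.pi_pos, sq_nonneg x.2])
  calc Real.exp (-(π/4) * x.1^2) * Real.exp (-(π/4) * x.2^2) ≤ 1 * 1 :=
    mul_le_mul h1 h2 (Real.exp_nonneg _) zero_le_one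
  _ = 1 := by ring

lemma gg_integrable : Integrable gg (volume : Measure (ℝ × ℝ)) := by
  rw [show (volume : Measure (ℝ × ℝ)) = (volume : Measure ℝ).prod volume from rfl]
  exact Integrable.mul_prod (integrable_exp_neg_mul_sq (by positivity))
    (integrable_exp_neg_mul_sq (by positivity))

noncomputable def gg2 (x : ℝ × ℝ) : ℝ :=
  Real.exp (-(π/2) * x.1^2) * Real.exp (-(π/2) * x.2^2)

lemma gg2_integrable : Integrable gg2 (volume : Measure (ℝ × ℝ)) := by
  rw [show (volume : Measure (ℝ × ℝ)) = (volume : Measure ℝ).prod volume from rfl]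
  exact Integrable.mul_prod (integrable_exp_neg_mul_sq (by positivity))
    (integrable_exp_neg_mul_sq (by positivity))

lemma gg_sq (x : ℝ × ℝ) : gg x ^ 2 = gg2 x := by
  unfold gg gg2
  rw [mul_pow, sq (Real.exp (-(π/4) * x.1^2)), sq (Real.exp (-(π/4) * x.2^2)),
    ← Real.exp_add, ← Real.exp_add]
  congr 2 <;> ring

noncomputable def CA : ℝ := 1/(2*Real.sqrt π) * KK

noncomputable def CB : ℝ := 1/(2*Real.sqrt 2*π) + 1/(2*Real.sqrt π) * KK

lemma CA_nonneg : 0 ≤ CA := mul_nonneg (by positivity) KK_nonneg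

lemma CB_nonneg : 0 ≤ CB := add_nonneg (by positivity) (mul_nonneg (by positivity) KK_nonneg)

lemma hA_bound (x : ℝ × ℝ) : |A x| ≤ CA * gg x := by
  have habs : |A x| = (1/(2*Real.sqrt π)) *
      ((|x.1| * Real.exp (-(π * x.1^2))) *
        (|Real.sign x.2| * (Ginc (2*π*x.2^2) * Real.exp (π * x.2^2)))) := by
    unfold A
    rw [abs_mul, abs_mul, abs_mul, abs_mul,
      abs_of_nonneg (Ginc_nonneg _), abs_of_nonneg (Real.exp_nonneg _),
      abs_of_nonneg (show (0:ℝ) ≤ 1 / (2 * Real.sqrt Real.pi) by positivity),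
      show -(π*(x.1^2 - x.2^2)) = -(π*x.1^2) + π*x.2^2 by ring, Real.exp_add]
    ring
  rw [habs]
  have hs : |Real.sign x.2| ≤ 1 := by
    rcases Real.sign_apply_eq x.2 with h|h|h <;> rw [h] <;> norm_num
  have h2 : |Real.sign x.2| * (Ginc (2*π*x.2^2) * Real.exp (π*x.2^2)) ≤
      KK * Real.exp (-(π/4) * x.2^2) := by
    calc |Real.sign x.2| * (Ginc (2*π*x.2^2) * Real.exp (π*x.2^2))
        ≤ 1 * (Ginc (2*π*x.2^2) * Real.exp (π*x.2^2)) :=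
          mul_le_mul_of_nonneg_right hs (mul_nonneg (Ginc_nonneg _) (Real.exp_nonneg _))
    _ = Ginc (2*π*x.2^2) * Real.exp (π*x.2^2) := one_mul _
    _ ≤ KK * Real.exp (-(π/4) * x.2^2) := lemA2 x.2
  calc (1/(2*Real.sqrt π)) *
      ((|x.1| * Real.exp (-(π * x.1^2))) *
        (|Real.sign x.2| * (Ginc (2*π*x.2^2) * Real.exp (π * x.2^2))))
      ≤ (1/(2*Real.sqrt π)) *
        (Real.exp (-(π/4) * x.1^2) * (KK * Real.exp (-(π/4) * x.2^2))) := by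
        apply mul_le_mul_of_nonneg_left _ (by positivity)
        exact mul_le_mul (lemA1 x.1) h2
          (mul_nonneg (abs_nonneg _) (mul_nonneg (Ginc_nonneg _) (Real.exp_nonneg _)))
          (Real.exp_nonneg _)
  _ = CA * gg x := by unfold CA gg; ring

lemma hB_bound (x : ℝ × ℝ) : |B x| ≤ CB * gg x := by
  have h1 : |(-(1 / (2 * Real.sqrt 2 * π)) * Real.exp (-(π * (x.1 ^ 2 + x.2 ^ 2))))| ≤
      1/(2*Real.sqrt 2*π) * gg x := by
    rw [abs_mul, abs_neg, abs_of_nonneg (show (0:ℝ) ≤ 1 / (2 * Real.sqrt 2 * π) by positivity),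
      abs_of_nonneg (Real.exp_nonneg _)]
    apply mul_le_mul_of_nonneg_left _ (by positivity)
    rw [show -(π*(x.1^2 + x.2^2)) = -(π*x.1^2) + -(π*x.2^2) by ring, Real.exp_add]
    unfold gg
    exact mul_le_mul
      (Real.exp_le_exp.mpr (by nlinarith [Real.pi_pos, sq_nonneg x.1]))
      (Real.exp_le_exp.mpr (by nlinarith [Real.pi_pos, sq_nonneg x.2]))
      (Real.exp_nonneg _) (Real.exp_nonneg _)
  have h2 : |(1 / (2 * Real.sqrt π) * |x.2| * Ginc (2 * π * x.2 ^ 2) *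
      Real.exp (-(π * (x.1 ^ 2 - x.2 ^ 2))))| ≤
      1/(2*Real.sqrt π) * KK * gg x := by
    rw [abs_mul, abs_mul, abs_mul, abs_abs,
      abs_of_nonneg (Ginc_nonneg _), abs_of_nonneg (Real.exp_nonneg _),
      abs_of_nonneg (show (0:ℝ) ≤ 1 / (2 * Real.sqrt π) by positivity),
      show -(π*(x.1^2 - x.2^2)) = -(π*x.1^2) + π*x.2^2 by ring, Real.exp_add]
    calc 1 / (2 * Real.sqrt π) * |x.2| * Ginc (2 * π * x.2 ^ 2) *
        (Real.exp (-(π * x.1^2)) * Real.exp (π * x.2^2))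
        = 1 / (2 * Real.sqrt π) *
          ((|x.2| * Ginc (2 * π * x.2 ^ 2) * Real.exp (π * x.2^2)) *
            Real.exp (-(π * x.1^2))) := by ring
    _ ≤ 1 / (2 * Real.sqrt π) *
          ((KK * Real.exp (-(π/4) * x.2^2)) * Real.exp (-(π/4) * x.1^2)) := by
        apply mul_le_mul_of_nonneg_left _ (by positivity)
        exact mul_le_mul (lemB2 x.2)
          (Real.exp_le_exp.mpr (by nlinarith [Real.pi_pos, sq_nonneg x.1]))
          (Real.exp_nonneg _)
          (mul_nonneg KK_nonneg (Real.exp_nonneg _))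
    _ = 1/(2*Real.sqrt π) * KK * gg x := by unfold gg; ring
  calc |B x| ≤ |(-(1 / (2 * Real.sqrt 2 * π)) * Real.exp (-(π * (x.1 ^ 2 + x.2 ^ 2))))| +
      |(1 / (2 * Real.sqrt π) * |x.2| * Ginc (2 * π * x.2 ^ 2) *
        Real.exp (-(π * (x.1 ^ 2 - x.2 ^ 2))))| := abs_add_le _ _
  _ ≤ 1/(2*Real.sqrt 2*π) * gg x + 1/(2*Real.sqrt π) * KK * gg x := add_le_add h1 h2
  _ = CB * gg x := by unfold CB; ring

lemma measurable_sign' : Measurable Real.sign := by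
  have h : Real.sign = fun r : ℝ => if r < 0 then (-1:ℝ) else if 0 < r then 1 else 0 :=
    funext fun r => rfl
  rw [h]
  exact Measurable.ite measurableSet_Iio measurable_const
    (Measurable.ite measurableSet_Ioi measurable_const measurable_const)

lemma A_measurable : Measurable A := by
  unfold A
  exact ((((measurable_fst.const_mul _).mul (measurable_sign'.comp measurable_snd)).mul
    (Ginc_continuous.measurable.comp ((measurable_snd.pow_const 2).const_mul (2*π)))).mul
    (Real.continuous_exp.measurable.comp
      ((((measurable_fst.pow_const 2).sub (measurable_snd.pow_const 2)).const_mul π).neg)))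

lemma B_continuous : Continuous B := by
  unfold B
  apply Continuous.add
  · exact continuous_const.mul (Real.continuous_exp.comp
      ((continuous_const.mul ((continuous_fst.pow 2).add (continuous_snd.pow 2))).neg))
  · exact (((continuous_const.mul continuous_snd.abs).mul
      (Ginc_continuous.comp (continuous_const.mul (continuous_snd.pow 2)))).mul
      (Real.continuous_exp.comp
        ((continuous_const.mul ((continuous_fst.pow 2).sub (continuous_snd.pow 2))).neg)))

/-- `A` and `B` are bounded on `ℝ²`, `B` is continuous, and both `A` and `B` are
integrable and square-integrable on `ℝ²`. -/
theorem stmt5 :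
    (∃ C : ℝ, ∀ x : ℝ × ℝ, |A x| ≤ C) ∧
    (∃ C : ℝ, ∀ x : ℝ × ℝ, |B x| ≤ C) ∧
    Continuous B ∧
    Integrable A (volume : Measure (ℝ × ℝ)) ∧
    Integrable B (volume : Measure (ℝ × ℝ)) ∧
    MemLp A 2 (volume : Measure (ℝ × ℝ)) ∧
    MemLp B 2 (volume : Measure (ℝ × ℝ)) := by
  have hAm : AEStronglyMeasurable A (volume : Measure (ℝ × ℝ)) :=
    A_measurable.aestronglyMeasurable
  have hBm : AEStronglyMeasurable B (volume : Measure (ℝ × ℝ)) :=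
    B_continuous.aestronglyMeasurable
  have boundA : ∀ x : ℝ × ℝ, |A x| ≤ CA := fun x =>
    (hA_bound x).trans (by
      calc CA * gg x ≤ CA * 1 := mul_le_mul_of_nonneg_left (gg_le_one x) CA_nonneg
      _ = CA := mul_one _)
  have boundB : ∀ x : ℝ × ℝ, |B x| ≤ CB := fun x =>
    (hB_bound x).trans (by
      calc CB * gg x ≤ CB * 1 := mul_le_mul_of_nonneg_left (gg_le_one x) CB_nonneg
      _ = CB := mul_one _)
  have hintA : Integrable A (volume : Measure (ℝ × ℝ)) := by
    refine Integrable.mono' (gg_integrable.const_mul CA) hAm ?_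
    exact Filter.Eventually.of_forall fun x => by
      rw [Real.norm_eq_abs]; exact hA_bound x
  have hintB : Integrable B (volume : Measure (ℝ × ℝ)) := by
    refine Integrable.mono' (gg_integrable.const_mul CB) hBm ?_
    exact Filter.Eventually.of_forall fun x => by
      rw [Real.norm_eq_abs]; exact hB_bound x
  have hsqA : MemLp A 2 (volume : Measure (ℝ × ℝ)) := by
    rw [memLp_two_iff_integrable_sq hAm]
    refine Integrable.mono' (gg2_integrable.const_mul (CA^2))
      ((hAm.mul hAm).congr (Filter.Eventually.of_forall fun x => (pow_two (A x)).symm)) ?_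
    refine Filter.Eventually.of_forall fun x => ?_
    rw [Real.norm_eq_abs, abs_pow]
    calc |A x| ^ 2 ≤ (CA * gg x)^2 := pow_le_pow_left₀ (abs_nonneg _) (hA_bound x) 2
    _ = CA^2 * gg x ^ 2 := by ring
    _ = CA^2 * gg2 x := by rw [gg_sq]
  have hsqB : MemLp B 2 (volume : Measure (ℝ × ℝ)) := by
    rw [memLp_two_iff_integrable_sq hBm]
    refine Integrable.mono' (gg2_integrable.const_mul (CB^2))
      ((hBm.mul hBm).congr (Filter.Eventually.of_forall fun x => (pow_two (B x)).symm)) ?_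
    refine Filter.Eventually.of_forall fun x => ?_
    rw [Real.norm_eq_abs, abs_pow]
    calc |B x| ^ 2 ≤ (CB * gg x)^2 := pow_le_pow_left₀ (abs_nonneg _) (hB_bound x) 2
    _ = CB^2 * gg x ^ 2 := by ring
    _ = CB^2 * gg2 x := by rw [gg_sq]
  exact ⟨⟨CA, boundA⟩, ⟨CB, boundB⟩, B_continuous, hintA, hintB, hsqA, hsqB⟩
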